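/- Fix any basis D_1,…,D_7 of the space of traceless real diagonal 8×8 matrices. For all real parameters x^α (α = 1,…,7), x^{ij} (1 ≤ i < j ≤ 8), x^I (I ∈ I_8), the Iwasawa coset representative C(x) = exp(Σ_α x^α h_{D_α}) · Π_{i<j} exp(x^{ij} J⁺_{ij}) · Π_{I ∈ I_8} exp(x^I λ_I) is a symplectic matrix: C(x)ᵀ Ω C(x) = Ω, where Ω = [[0, −I_28],[I_28, 0]]. -/

import Mathlib

open Matrix

/-- Index set for the 28-dimensional space `Λ²(ℝ⁸)`: ordered pairs `i < j` in `Fin 8`. -/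
abbrev PairIdx : Type := {p : Fin 8 × Fin 8 // p.1 < p.2}

/-- Index set for the 56-dimensional space `W = Λ²V ⊕ Λ²(V*)`. -/
abbrev WIdx : Type := PairIdx ⊕ PairIdx

/-- The action of an `8×8` matrix `M` on `Λ²V`, `M(eᵢ ∧ eⱼ) = (M eᵢ) ∧ eⱼ + eᵢ ∧ (M eⱼ)`,
written as a `28×28` matrix in the basis `{e_{ij}}_{i<j}`. -/
def lam2 (M : Matrix (Fin 8) (Fin 8) ℝ) : Matrix PairIdx PairIdx ℝ :=
  Matrix.of fun a b =>
    M a.1.1 b.1.1 * (if a.1.2 = b.1.2 then 1 else 0)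
    - M a.1.2 b.1.1 * (if a.1.1 = b.1.2 then 1 else 0)
    + M a.1.2 b.1.2 * (if a.1.1 = b.1.1 then 1 else 0)
    - M a.1.1 b.1.2 * (if a.1.2 = b.1.1 then 1 else 0)

/-- The `56×56` extension of an `8×8` matrix `M` to `W = Λ²V ⊕ Λ²(V*)`:
it acts on `Λ²V` as `lam2 M` and on `Λ²(V*)` by minus the transpose of this action. -/
def extW (M : Matrix (Fin 8) (Fin 8) ℝ) : Matrix WIdx WIdx ℝ :=
  Matrix.fromBlocks (lam2 M) 0 0 (-(lam2 M)ᵀ)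

/-- The antisymmetric `8×8` matrix `A_{kl} eᵢ = δ_{li} e_k − δ_{ki} e_l`. -/
def Amat (k l : Fin 8) : Matrix (Fin 8) (Fin 8) ℝ :=
  Matrix.of fun a b => (if a = k ∧ b = l then 1 else 0) - (if a = l ∧ b = k then 1 else 0)

/-- The symmetric `8×8` matrix `S_{kl} eᵢ = δ_{li} e_k + δ_{ki} e_l`. -/
def Smat (k l : Fin 8) : Matrix (Fin 8) (Fin 8) ℝ :=
  Matrix.of fun a b => (if a = k ∧ b = l then 1 else 0) + (if a = l ∧ b = k then 1 else 0)

/-- `J⁺_{kl} = (S_{kl} + A_{kl})/√2` as a `56×56` matrix. -/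
noncomputable def Jplus (k l : Fin 8) : Matrix WIdx WIdx ℝ :=
  (Real.sqrt 2)⁻¹ • (extW (Smat k l) + extW (Amat k l))

/-- `J⁻_{kl} = (S_{kl} − A_{kl})/√2` as a `56×56` matrix. -/
noncomputable def Jminus (k l : Fin 8) : Matrix WIdx WIdx ℝ :=
  (Real.sqrt 2)⁻¹ • (extW (Smat k l) - extW (Amat k l))

/-- `h_D` for a diagonal matrix `D = diag d`: acts by `(dᵢ + dⱼ)` on `e_{ij}` and
`−(dᵢ + dⱼ)` on `ε^{ij}`. -/
def hD (d : Fin 8 → ℝ) : Matrix WIdx WIdx ℝ := extW (Matrix.diagonal d)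

/-- Tetra-indices: strictly increasing 4-tuples in `{1,…,8}`. -/
abbrev TetraIdx : Type := {f : Fin 4 → Fin 8 // StrictMono f}

/-- The 8-index Levi-Civita symbol. -/
noncomputable def levi (f : Fin 8 → Fin 8) : ℝ :=
  if h : Function.Bijective f then ((Equiv.Perm.sign (Equiv.ofBijective f h) : ℤ) : ℝ) else 0

/-- The rank-4 generalized Kronecker delta `δ^{j₁j₂j₃j₄}_{i₁i₂i₃i₄}`. -/
noncomputable def gdelta (i j : Fin 4 → Fin 8) : ℝ :=
  ∑ σ : Equiv.Perm (Fin 4),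
    ((Equiv.Perm.sign σ : ℤ) : ℝ) * ∏ t : Fin 4, (if j t = i (σ t) then 1 else 0)

/-- `ε_{i₁i₂i₃i₄ a₁a₂ b₁b₂}` for a tetra-index `I` and pair indices `a`, `b`. -/
noncomputable def leviI (I : TetraIdx) (a b : PairIdx) : ℝ :=
  levi ![I.val 0, I.val 1, I.val 2, I.val 3, a.1.1, a.1.2, b.1.1, b.1.2]

/-- `δ^{a₁ a₂ b₁ b₂}_{i₁i₂i₃i₄}` for a tetra-index `I` and pair indices `a`, `b`. -/
noncomputable def gdeltaI (I : TetraIdx) (a b : PairIdx) : ℝ :=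
  gdelta I.val ![a.1.1, a.1.2, b.1.1, b.1.2]

/-- The `56×56` matrix `λ_I`: block off-diagonal w.r.t. `W = Λ²V ⊕ Λ²(V*)`, with
`λ_I(e_{j₁j₂}) = ∑_{k₁<k₂} ε_{I j₁j₂k₁k₂} ε^{k₁k₂}` and
`λ_I(ε^{j₁j₂}) = ∑_{k₁<k₂} δ^{j₁j₂k₁k₂}_I e_{k₁k₂}`. -/
noncomputable def lamT (I : TetraIdx) : Matrix WIdx WIdx ℝ :=
  Matrix.fromBlocks 0 (Matrix.of fun K J => gdeltaI I J K) (Matrix.of fun K J => leviI I J K) 0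

/-- The symplectic metric `Ω`. -/
def OmegaW : Matrix WIdx WIdx ℝ :=
  Matrix.fromBlocks 0 (-1) 1 0

/-- The pair index `(1,2)` (i.e. `(0,1)` in 0-based indexing). -/
def pair01 : PairIdx := ⟨(0, 1), by decide⟩


section IwasawaAux

open NormedSpace

/-- `Ω² = -1`. -/
lemma omegaW_sq : OmegaW * OmegaW = -1 := by
  have h : (-1 : Matrix WIdx WIdx ℝ) = Matrix.fromBlocks (-1) 0 0 (-1) := by
    rw [← Matrix.fromBlocks_one, Matrix.fromBlocks_neg, neg_zero]
  rw [h]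
  simp [OmegaW, Matrix.fromBlocks_multiply]

/-- `Ω` as a unit, with inverse `-Ω`. -/
noncomputable def OmegaWU : (Matrix WIdx WIdx ℝ)ˣ where
  val := OmegaW
  inv := -OmegaW
  val_inv := by rw [mul_neg, omegaW_sq, neg_neg]
  inv_val := by rw [neg_mul, omegaW_sq, neg_neg]

/-- A matrix is Hamiltonian if `Aᵀ Ω = -(Ω A)`. -/
def IsHamW (A : Matrix WIdx WIdx ℝ) : Prop := Aᵀ * OmegaW = -(OmegaW * A)

/-- A matrix is symplectic if `Mᵀ Ω M = Ω`. -/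
def IsSympW (M : Matrix WIdx WIdx ℝ) : Prop := Mᵀ * OmegaW * M = OmegaW

lemma isHamW_zero : IsHamW 0 := by simp [IsHamW]

lemma IsHamW.add {A B : Matrix WIdx WIdx ℝ} (hA : IsHamW A) (hB : IsHamW B) :
    IsHamW (A + B) := by
  unfold IsHamW at *
  rw [Matrix.transpose_add, add_mul, hA, hB, mul_add, neg_add]

lemma IsHamW.smul {A : Matrix WIdx WIdx ℝ} (hA : IsHamW A) (c : ℝ) :
    IsHamW (c • A) := by
  unfold IsHamW at *
  rw [Matrix.transpose_smul, Matrix.smul_mul, hA, Matrix.mul_smul, smul_neg]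

lemma isSympW_one : IsSympW 1 := by simp [IsSympW]

lemma IsSympW.mul {M N : Matrix WIdx WIdx ℝ} (hM : IsSympW M) (hN : IsSympW N) :
    IsSympW (M * N) := by
  unfold IsSympW at *
  have key : Nᵀ * (Mᵀ * OmegaW * M) * N = OmegaW := by rw [hM]; exact hN
  rw [Matrix.transpose_mul]
  conv_rhs => rw [← key]
  noncomm_ring

lemma isSympW_list_prod (l : List (Matrix WIdx WIdx ℝ)) (h : ∀ M ∈ l, IsSympW M) :
    IsSympW l.prod := by
  induction l with
  | nil => simpa using isSympW_one
  | cons a t ih =>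
    rw [List.prod_cons]
    exact (h a (List.mem_cons_self)).mul (ih fun M hM => h M (List.mem_cons_of_mem _ hM))

/-- The exponential of a Hamiltonian matrix is symplectic. -/
lemma IsHamW.exp_symp {A : Matrix WIdx WIdx ℝ} (h : IsHamW A) : IsSympW (exp A) := by
  have hAT : Aᵀ = OmegaW * A * OmegaW := by
    have h2 : Aᵀ * OmegaW * OmegaW = -(OmegaW * A) * OmegaW := by rw [h]
    rw [mul_assoc, omegaW_sq, mul_neg_one, neg_mul] at h2
    exact neg_injective h2
  have hconj : Aᵀ = (OmegaWU : Matrix WIdx WIdx ℝ) * (-A) *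
      ((OmegaWU⁻¹ : (Matrix WIdx WIdx ℝ)ˣ) : Matrix WIdx WIdx ℝ) := by
    show Aᵀ = OmegaW * (-A) * (-OmegaW)
    rw [hAT]; noncomm_ring
  have h1 : (↑OmegaWU⁻¹ : Matrix WIdx WIdx ℝ) * OmegaW = 1 := by
    show -OmegaW * OmegaW = 1
    rw [neg_mul, omegaW_sq, neg_neg]
  have h2 : exp (-A) * exp A = 1 := by
    rw [← Matrix.exp_add_of_commute (-A) A (Commute.refl A).neg_left, neg_add_cancel,
      exp_zero]
  unfold IsSympW
  rw [← Matrix.exp_transpose, hconj, Matrix.exp_units_conj]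
  calc (↑OmegaWU : Matrix WIdx WIdx ℝ) * exp (-A) * ↑OmegaWU⁻¹ * OmegaW * exp A
      = ↑OmegaWU * (exp (-A) * ((↑OmegaWU⁻¹ * OmegaW) * exp A)) := by noncomm_ring
    _ = OmegaW := by rw [h1, one_mul, h2, mul_one]; rfl

/-- Every `extW M` is Hamiltonian. -/
lemma isHamW_extW (M : Matrix (Fin 8) (Fin 8) ℝ) : IsHamW (extW M) := by
  unfold IsHamW extW OmegaW
  rw [Matrix.fromBlocks_transpose]
  simp [Matrix.fromBlocks_multiply, Matrix.fromBlocks_neg]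

lemma isHamW_hD (d : Fin 8 → ℝ) : IsHamW (hD d) := isHamW_extW _

lemma isHamW_Jplus (k l : Fin 8) : IsHamW (Jplus k l) := by
  rw [Jplus]
  exact ((isHamW_extW _).add (isHamW_extW _)).smul _

/-- Composing with a permutation multiplies the Levi-Civita symbol by its sign. -/
lemma levi_comp (f : Fin 8 → Fin 8) (τ : Equiv.Perm (Fin 8)) :
    levi (f ∘ ⇑τ) = ((Equiv.Perm.sign τ : ℤ) : ℝ) * levi f := by
  unfold levi
  by_cases hf : Function.Bijective f
  · have h2 : Function.Bijective (f ∘ ⇑τ) := hf.comp τ.bijective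
    rw [dif_pos h2, dif_pos hf]
    have he : Equiv.ofBijective (f ∘ ⇑τ) h2 = Equiv.ofBijective f hf * τ := by
      ext x; rfl
    rw [he, Equiv.Perm.sign_mul]
    push_cast
    ring
  · have h2 : ¬ Function.Bijective (f ∘ ⇑τ) := by
      intro h2
      apply hf
      have hfe : f = (f ∘ ⇑τ) ∘ ⇑τ.symm := by funext x; simp
      rw [hfe]
      exact h2.comp τ.symm.bijective
    rw [dif_neg h2, dif_neg hf, mul_zero]

/-- Composing the upper indices with a permutation multiplies `gdelta` by its sign. -/
lemma gdelta_comp (i j : Fin 4 → Fin 8) (τ : Equiv.Perm (Fin 4)) :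
    gdelta i (j ∘ ⇑τ) = ((Equiv.Perm.sign τ : ℤ) : ℝ) * gdelta i j := by
  unfold gdelta
  rw [Finset.mul_sum]
  rw [← Equiv.sum_comp (Equiv.mulRight τ)
    (fun σ : Equiv.Perm (Fin 4) =>
      ((Equiv.Perm.sign σ : ℤ) : ℝ) * ∏ t : Fin 4, (if (j ∘ ⇑τ) t = i (σ t) then 1 else 0))]
  refine Finset.sum_congr rfl fun σ _ => ?_
  have hprod : (∏ t : Fin 4, (if (j ∘ ⇑τ) t = i ((Equiv.mulRight τ σ) t) then (1:ℝ) else 0))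
      = ∏ t : Fin 4, (if j t = i (σ t) then (1:ℝ) else 0) := by
    rw [← Equiv.prod_comp τ (fun t => if j t = i (σ t) then (1:ℝ) else 0)]
    refine Finset.prod_congr rfl fun t _ => ?_
    simp [Equiv.coe_mulRight, Equiv.Perm.mul_apply]
    congr
  rw [hprod]
  simp only [Equiv.coe_mulRight, Equiv.Perm.sign_mul]
  push_cast
  ring

/-- Symmetry of `leviI` under exchanging the two pair indices. -/
lemma leviI_symm (I : TetraIdx) (a b : PairIdx) : leviI I a b = leviI I b a := by
  unfold leviI
  have h : (![I.val 0, I.val 1, I.val 2, I.val 3, b.1.1, b.1.2, a.1.1, a.1.2] : Fin 8 → Fin 8)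
      = ![I.val 0, I.val 1, I.val 2, I.val 3, a.1.1, a.1.2, b.1.1, b.1.2] ∘
        ⇑((Equiv.swap (4 : Fin 8) 6 * Equiv.swap 5 7 : Equiv.Perm (Fin 8))) := by
    funext t; fin_cases t <;> rfl
  rw [h, levi_comp]
  norm_num [show Equiv.Perm.sign ((Equiv.swap (4 : Fin 8) 6 * Equiv.swap 5 7 : Equiv.Perm (Fin 8))) = 1 from by decide]

/-- Symmetry of `gdeltaI` under exchanging the two pair indices. -/
lemma gdeltaI_symm (I : TetraIdx) (a b : PairIdx) : gdeltaI I a b = gdeltaI I b a := by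
  unfold gdeltaI
  have h : (![b.1.1, b.1.2, a.1.1, a.1.2] : Fin 4 → Fin 8)
      = ![a.1.1, a.1.2, b.1.1, b.1.2] ∘
        ⇑((Equiv.swap (0 : Fin 4) 2 * Equiv.swap 1 3 : Equiv.Perm (Fin 4))) := by
    funext t; fin_cases t <;> rfl
  rw [h, gdelta_comp]
  norm_num [show Equiv.Perm.sign ((Equiv.swap (0 : Fin 4) 2 * Equiv.swap 1 3 : Equiv.Perm (Fin 4))) = 1 from by decide]

/-- Every `lamT I` is Hamiltonian. -/
lemma isHamW_lamT (I : TetraIdx) : IsHamW (lamT I) := by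
  have hB : (Matrix.of fun K J => gdeltaI I J K)ᵀ = (Matrix.of fun K J => gdeltaI I J K) := by
    ext a b
    simp only [Matrix.transpose_apply, Matrix.of_apply]
    exact gdeltaI_symm I a b
  have hC : (Matrix.of fun K J => leviI I J K)ᵀ = (Matrix.of fun K J => leviI I J K) := by
    ext a b
    simp only [Matrix.transpose_apply, Matrix.of_apply]
    exact leviI_symm I a b
  unfold IsHamW lamT OmegaW
  rw [Matrix.fromBlocks_transpose, hB, hC]
  simp [Matrix.fromBlocks_multiply, Matrix.fromBlocks_neg]

end IwasawaAux

open NormedSpace in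
/-- The Iwasawa coset representative
`C(x) = exp(Σ_α x^α h_{D_α}) · Π_{i<j} exp(x^{ij} J⁺_{ij}) · Π_{I ∈ I₈} exp(x^I λ_I)`,
the products over `i<j` and over `I ∈ I₈` being taken in a fixed order. -/
noncomputable def iwasawaC (D : Fin 7 → Fin 8 → ℝ) (x : Fin 7 → ℝ)
    (y : PairIdx → ℝ) (z : TetraIdx → ℝ) : Matrix WIdx WIdx ℝ :=
  exp (∑ α, x α • hD (D α)) *
    (((Finset.univ : Finset PairIdx).toList).map
        (fun p => exp (y p • Jplus p.1.1 p.1.2))).prod *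
    (((Finset.univ.filter (fun I : TetraIdx => I.val 3 = 7)).toList).map
        (fun I => exp (z I • lamT I))).prod

/-- For any basis `D₁,…,D₇` of the traceless real diagonal `8×8`
matrices and all real parameters `x^α`, `x^{ij}`, `x^I`, the Iwasawa coset representative
`C(x)` is symplectic: `C(x)ᵀ Ω C(x) = Ω`. -/
theorem iwasawa_coset_symplectic (D : Fin 7 → Fin 8 → ℝ)
    (htr : ∀ α, ∑ i, D α i = 0) (hbasis : LinearIndependent ℝ D)
    (x : Fin 7 → ℝ) (y : PairIdx → ℝ) (z : TetraIdx → ℝ) :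
    (iwasawaC D x y z)ᵀ * OmegaW * iwasawaC D x y z = OmegaW := by
  have h1 : IsSympW (NormedSpace.exp (∑ α, x α • hD (D α))) := by
    refine IsHamW.exp_symp ?_
    exact Finset.sum_induction _ IsHamW (fun a b ha hb => ha.add hb) isHamW_zero
      (fun α _ => (isHamW_hD (D α)).smul (x α))
  have h2 : IsSympW ((((Finset.univ : Finset PairIdx).toList).map
      (fun p => NormedSpace.exp (y p • Jplus p.1.1 p.1.2))).prod) := by
    refine isSympW_list_prod _ ?_
    intro M hM
    rw [List.mem_map] at hM
    obtain ⟨p, _, rfl⟩ := hM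
    exact ((isHamW_Jplus p.1.1 p.1.2).smul (y p)).exp_symp
  have h3 : IsSympW ((((Finset.univ.filter (fun I : TetraIdx => I.val 3 = 7)).toList).map
      (fun I => NormedSpace.exp (z I • lamT I))).prod) := by
    refine isSympW_list_prod _ ?_
    intro M hM
    rw [List.mem_map] at hM
    obtain ⟨I, _, rfl⟩ := hM
    exact ((isHamW_lamT I).smul (z I)).exp_symp
  show IsSympW (iwasawaC D x y z)
  rw [iwasawaC]
  exact (h1.mul h2).mul h3
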